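/- Let (Q, I) be a homotopy coherent presentation and let [u], [v] be classes of paths not equivalent to any path in I such that [u] = [v][u] (i.e., u ∼ vu). Then v is a trivial path (a path of length zero). -/

import Mathlib

open Quiver

universe v u

/-- The type of all paths in the quiver `V`, together with their endpoints. -/
abbrev PathsIn (V : Type u) [Quiver.{v + 1} V] : Type (max u (v + 1)) :=
  Σ x y : V, Quiver.Path x y

variable (k : Type*) [Field k] (V : Type u) [Quiver.{v + 1} V]

/-- The underlying vector space of the path algebra: the free `k`-module on paths. -/
abbrev PathVec := (PathsIn V) →₀ k

/-- The length of a path. -/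
def pathLen (p : PathsIn V) : ℕ := p.2.2.length

/-- Composition of composable paths. -/
def pcomp (p q : PathsIn V) (h : p.2.1 = q.1) : PathsIn V :=
  ⟨p.1, q.2.1, p.2.2.comp (h.symm ▸ q.2.2)⟩

open scoped Classical in
/-- Multiplication `u ρ w` of an element `ρ` of the path algebra by paths `u`, `w`. -/
noncomputable def pmul (u : PathsIn V) (ρ : PathVec k V) (w : PathsIn V) : PathVec k V :=
  ρ.sum fun p c => if h : u.2.1 = p.1 ∧ p.2.1 = w.1
    then Finsupp.single (pcomp V (pcomp V u p h.1) w h.2) c else 0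

/-- The two-sided ideal of the path algebra generated by a set `S`. -/
noncomputable def idealGen (S : Set (PathVec k V)) : Submodule k (PathVec k V) :=
  Submodule.span k {x | ∃ u ρ w, ρ ∈ S ∧ x = pmul k V u ρ w}

open scoped Classical in
/-- A minimal relation: an element of `I`, with all paths in its support parallel,
such that no proper nonempty subsum lies in `I`. -/
def IsMinimalRelation (I : Submodule k (PathVec k V)) (ρ : PathVec k V) : Prop :=
  ρ ∈ I ∧ (∃ x y : V, ∀ p ∈ ρ.support, p.1 = x ∧ p.2.1 = y) ∧
    ∀ J : Finset (PathsIn V), J ⊆ ρ.support → J.Nonempty → J ≠ ρ.support →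
      ρ.filter (· ∈ J) ∉ I

/-- The homotopy relation `∼` on paths: the smallest equivalence relation such that
paths appearing in a minimal relation are equivalent, compatible with two-sided
composition. -/
inductive HRel (I : Submodule k (PathVec k V)) : PathsIn V → PathsIn V → Prop
  | of (ρ : PathVec k V) (hρ : IsMinimalRelation k V I ρ) (p q : PathsIn V)
      (hp : p ∈ ρ.support) (hq : q ∈ ρ.support) : HRel I p q
  | refl (p : PathsIn V) : HRel I p p
  | symm {p q} : HRel I p q → HRel I q p
  | trans {p q r} : HRel I p q → HRel I q r → HRel I p r
  | compat (a x y b : V) (u v : Quiver.Path x y) (w : Quiver.Path a x) (w' : Quiver.Path y b) :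
      HRel I ⟨x, y, u⟩ ⟨x, y, v⟩ →
      HRel I ⟨a, b, (w.comp u).comp w'⟩ ⟨a, b, (w.comp v).comp w'⟩

/-- A path lies in `I` (i.e. is zero in `A = kQ/I`). -/
def memI (I : Submodule k (PathVec k V)) (p : PathsIn V) : Prop :=
  (Finsupp.single p 1 : PathVec k V) ∈ I

/-- The span of paths of length at least `m` (the `m`-th power of the arrow ideal). -/
noncomputable def arrowPow (m : ℕ) : Submodule k (PathVec k V) :=
  Submodule.span k {x | ∃ p : PathsIn V, m ≤ pathLen V p ∧ x = Finsupp.single p 1}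

/-- The ideal `I` is admissible: `F^m ⊆ I ⊆ F^2` for some `m ≥ 2`. -/
def IsAdmissible (I : Submodule k (PathVec k V)) : Prop :=
  (∃ m, 2 ≤ m ∧ arrowPow k V m ≤ I) ∧ I ≤ arrowPow k V 2

/-- Homotopy coherence of a presentation. -/
def HomotopyCoherent (I : Submodule k (PathVec k V)) : Prop :=
  ∀ p q, HRel k V I p q → (memI k V I p ↔ memI k V I q)

/-- A path represents a class in `Σ_ν`: no path equivalent to it lies in `I`. -/
def SigmaClass (I : Submodule k (PathVec k V)) (p : PathsIn V) : Prop :=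
  ∀ q, HRel k V I p q → ¬ memI k V I q

/-- Equivalent paths are parallel. -/
lemma HRel.endpoints {I : Submodule k (PathVec k V)} {p q : PathsIn V}
    (h : HRel k V I p q) : p.1 = q.1 ∧ p.2.1 = q.2.1 := by
  induction h with
  | of ρ hρ p q hp hq =>
      obtain ⟨x, y, hxy⟩ := hρ.2.1
      exact ⟨(hxy p hp).1.trans (hxy q hq).1.symm,
        (hxy p hp).2.trans (hxy q hq).2.symm⟩
  | refl p => exact ⟨rfl, rfl⟩
  | symm _ ih => exact ⟨ih.1.symm, ih.2.symm⟩
  | trans _ _ ih₁ ih₂ => exact ⟨ih₁.1.trans ih₂.1, ih₁.2.trans ih₂.2⟩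
  | compat a x y b u v w w' _ _ => exact ⟨rfl, rfl⟩

/-- Iterated left composition `v^n u`. -/
def iterComp {V : Type u} [Quiver.{v+1} V] {a b : V}
    (vp : Quiver.Path a a) (up : Quiver.Path a b) : ℕ → Quiver.Path a b
  | 0 => up
  | n + 1 => vp.comp (iterComp vp up n)

lemma iterComp_length {V : Type u} [Quiver.{v+1} V] {a b : V}
    (vp : Quiver.Path a a) (up : Quiver.Path a b) (n : ℕ) :
    (iterComp vp up n).length = n * vp.length + up.length := by
  induction n with
  | zero => simp [iterComp]
  | succ n ih => rw [iterComp, Quiver.Path.length_comp, ih]; ring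

lemma hrel_iterComp (I : Submodule k (PathVec k V)) {a b : V}
    (vp : Quiver.Path a a) (up : Quiver.Path a b)
    (h1 : HRel k V I ⟨a, b, up⟩ ⟨a, b, vp.comp up⟩) (n : ℕ) :
    HRel k V I ⟨a, b, up⟩ ⟨a, b, iterComp vp up n⟩ := by
  induction n with
  | zero => exact HRel.refl _
  | succ n ih =>
      refine ih.trans ?_
      -- step: iterComp n ∼ iterComp (n+1)
      clear ih
      induction n with
      | zero => exact h1
      | succ n ih =>
          have := HRel.compat (I := I) a a b b (iterComp vp up n)
            (iterComp vp up (n + 1)) vp Quiver.Path.nil ih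
          exact this

/-- Let `(Q, I)` be a homotopy coherent presentation (with `I`
admissible) and `[u]`, `[v]` classes of paths not equivalent to any path in `I`
such that `u ∼ v u`.  Then `v` is a trivial path. -/
theorem trivial_of_self_absorbing (I : Submodule k (PathVec k V))
    (hadm : IsAdmissible k V I) (hhc : HomotopyCoherent k V I)
    (u v : PathsIn V) (hu : SigmaClass k V I u) (hv : SigmaClass k V I v)
    (h : v.2.1 = u.1) (heq : HRel k V I u (pcomp V v u h)) :
    pathLen V v = 0 := by
  obtain ⟨hsrc, _⟩ := heq.endpoints k V
  obtain ⟨a, b, up⟩ := u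
  obtain ⟨c, d, vp⟩ := v
  dsimp [pcomp] at hsrc h
  subst d
  subst c
  -- now vp : Path a a, up : Path a b
  by_contra hlen
  have hpos : 1 ≤ vp.length := Nat.one_le_iff_ne_zero.mpr hlen
  obtain ⟨⟨m, hm2, hmI⟩, _⟩ := hadm
  have h1 : HRel k V I ⟨a, b, up⟩ ⟨a, b, vp.comp up⟩ := heq
  have hrel := hrel_iterComp k V I vp up h1 m
  have hlenm : m ≤ pathLen V ⟨a, b, iterComp vp up m⟩ := by
    show m ≤ (iterComp vp up m).length
    rw [iterComp_length]
    calc m = m * 1 := (mul_one m).symm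
      _ ≤ m * vp.length := Nat.mul_le_mul_left m hpos
      _ ≤ m * vp.length + up.length := Nat.le_add_right _ _
  have hmem : memI k V I ⟨a, b, iterComp vp up m⟩ :=
    hmI (Submodule.subset_span ⟨⟨a, b, iterComp vp up m⟩, hlenm, rfl⟩)
  exact hu _ hrel hmem
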